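/- Let t = (g, σ, Ω) be a symplectic triple with [g,g] abelian and split (g = b ×_ρ a with a σ-stable abelian complement to b = [g,g]). Assume t is indecomposable and non-flat. Set l = [k,p]. Then the pairing Ω: a × l → ℝ is nondegenerate (a and l are dual Lagrangian-type subspaces of p); equivalently, the subspace V := l^⊥ ∩ a (orthogonal with respect to Ω inside p) is zero. -/

import Mathlib

/-- let `t = (g, σ, Ω)` be a split holonomy isotropic symplectic triple
(`[g,g]` abelian, `a ⊆ P` an abelian complement to the derived algebra), indecomposable
and non-flat. Then the subspace `V = l^⊥ ∩ a` (with `l = [K,P]`) vanishes, i.e. the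
pairing `Ω : a × l → ℝ` is nondegenerate. -/
theorem dual_lagrangian_pairing_nondegenerate
    (g : Type*) [LieRing g] [LieAlgebra ℝ g] [FiniteDimensional ℝ g]
    (K P : Submodule ℝ g)
    (σ : g →ₗ[ℝ] g)
    (Ω : g →ₗ[ℝ] g →ₗ[ℝ] ℝ)
    -- `σ` is an involutive automorphism with eigenspaces `K` and `P`
    (hσauto : ∀ x y : g, σ ⁅x, y⁆ = ⁅σ x, σ y⁆)
    (hσK : ∀ x ∈ K, σ x = x)
    (hσP : ∀ x ∈ P, σ x = -x)
    (hcompl : IsCompl K P)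
    (hkp : ∀ x ∈ K, ∀ y ∈ P, ⁅x, y⁆ ∈ P)
    (hpp : ∀ x ∈ P, ∀ y ∈ P, ⁅x, y⁆ ∈ K)
    -- `[P,P] = K`
    (hppk : K ≤ Submodule.span ℝ {z : g | ∃ x ∈ P, ∃ y ∈ P, z = ⁅x, y⁆})
    -- faithfulness of the action of `K` on `P`
    (hfaith : ∀ x ∈ K, (∀ y ∈ P, ⁅x, y⁆ = 0) → x = 0)
    -- `Ω` is a skew 2-cocycle with `ι_K Ω = 0`, nondegenerate on `P`
    (hskew : ∀ x y : g, Ω x y = - Ω y x)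
    (hcocycle : ∀ x y z : g, Ω ⁅x, y⁆ z + Ω ⁅y, z⁆ x + Ω ⁅z, x⁆ y = 0)
    (hik : ∀ x ∈ K, ∀ y : g, Ω x y = 0)
    (hnond : ∀ x ∈ P, (∀ y ∈ P, Ω x y = 0) → x = 0)
    -- holonomy isotropic: `[g,g]` is abelian
    (hHI : ∀ x y z w : g, ⁅(⁅x, y⁆ : g), (⁅z, w⁆ : g)⁆ = 0)
    -- split: `a ⊆ P` is an abelian subalgebra complementary to `[g,g]`
    (a : LieSubalgebra ℝ g)
    (haP : a.toSubmodule ≤ P)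
    (hab : ∀ x ∈ a, ∀ y ∈ a, ⁅x, y⁆ = (0 : g))
    (hsplit : IsCompl (Submodule.span ℝ {z : g | ∃ x y : g, z = ⁅x, y⁆}) a.toSubmodule)
    -- non-flat
    (hnonflat : K ≠ ⊥)
    -- indecomposable: no nontrivial decomposition into `σ`-stable `Ω`-orthogonal ideals
    (hindec : ∀ W₁ W₂ : Submodule ℝ g,
      (∀ x : g, ∀ w ∈ W₁, ⁅x, w⁆ ∈ W₁) → (∀ x : g, ∀ w ∈ W₂, ⁅x, w⁆ ∈ W₂) →
      (∀ w ∈ W₁, σ w ∈ W₁) → (∀ w ∈ W₂, σ w ∈ W₂) →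
      IsCompl W₁ W₂ →
      (∀ w ∈ W₁, ∀ w' ∈ W₂, Ω w w' = 0) →
      W₁ = ⊥ ∨ W₂ = ⊥) :
    ∀ v ∈ a, (∀ x ∈ K, ∀ y ∈ P, Ω v ⁅x, y⁆ = 0) → v = 0 := by
  classical
  intro v₀ hv₀a hv₀
  -- the derived algebra and `l = [K,P]` as submodules
  set D : Submodule ℝ g := Submodule.span ℝ {z : g | ∃ x y : g, z = ⁅x, y⁆} with hD
  set l' : Submodule ℝ g := Submodule.span ℝ {z : g | ∃ x ∈ K, ∃ y ∈ P, z = ⁅x, y⁆} with hl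
  have hl'P : l' ≤ P := by
    rw [hl, Submodule.span_le]
    rintro z ⟨x, hx, y, hy, rfl⟩
    exact hkp x hx y hy
  have hl'D : l' ≤ D := by
    rw [hl, hD, Submodule.span_le]
    rintro z ⟨x, hx, y, hy, rfl⟩
    exact Submodule.subset_span ⟨x, y, rfl⟩
  have hKD : K ≤ D := by
    refine le_trans hppk ?_
    rw [hD]
    apply Submodule.span_mono
    rintro z ⟨x, hx, y, hy, rfl⟩
    exact ⟨x, y, rfl⟩
  -- any bracket annihilates the derived algebra (holonomy isotropy)
  have hDbr : ∀ x y : g, ∀ d ∈ D, ⁅(⁅x, y⁆ : g), d⁆ = 0 := by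
    intro x y d hd
    have h1 : D ≤ LinearMap.ker (LieAlgebra.ad ℝ g ⁅x, y⁆) := by
      rw [hD, Submodule.span_le]
      rintro z ⟨p, q, rfl⟩
      simpa [LieAlgebra.ad_apply] using hHI x y p q
    simpa [LieAlgebra.ad_apply] using h1 hd
  -- elements of `D` annihilate `K`
  have hDK : ∀ d ∈ D, ∀ k ∈ K, ⁅d, k⁆ = 0 := by
    intro d hd k hk
    have h1 : D ≤ LinearMap.ker (LieAlgebra.ad ℝ g k) := by
      rw [hD, Submodule.span_le]
      rintro z ⟨p, q, rfl⟩
      have := hDbr p q k (hKD hk)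
      simpa [LieAlgebra.ad_apply] using (by rw [← lie_skew, this, neg_zero] : ⁅k, ⁅p, q⁆⁆ = 0)
    have := h1 hd
    rw [LinearMap.mem_ker, LieAlgebra.ad_apply] at this
    rw [← lie_skew, this, neg_zero]
  -- the subspace `V = l^⊥ ∩ a`
  set V : Submodule ℝ g := a.toSubmodule ⊓ (LinearMap.BilinForm.orthogonal Ω l') with hV
  have hVmem : ∀ x : g, x ∈ V ↔ x ∈ a ∧ ∀ n ∈ l', Ω n x = 0 := by
    intro x
    rw [hV, Submodule.mem_inf, LinearMap.BilinForm.mem_orthogonal_iff]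
    exact Iff.rfl
  have hVa : V ≤ a.toSubmodule := inf_le_left
  have hVP : V ≤ P := le_trans hVa haP
  -- our vector lies in `V`
  have hv₀V : v₀ ∈ V := by
    rw [hVmem]
    refine ⟨hv₀a, ?_⟩
    intro n hn
    have h1 : l' ≤ LinearMap.ker (Ω.flip v₀) := by
      rw [hl, Submodule.span_le]
      rintro z ⟨x, hx, y, hy, rfl⟩
      have := hv₀ x hx y hy
      simp only [SetLike.mem_coe, LinearMap.mem_ker, LinearMap.flip_apply]
      rw [hskew]
      simpa using this
    simpa using h1 hn
  -- elements of `V` annihilate `K`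
  have hVK : ∀ v ∈ V, ∀ k ∈ K, ⁅v, k⁆ = 0 := by
    intro v hv k hk
    obtain ⟨hva, hvo⟩ := (hVmem v).mp hv
    have hvP : v ∈ P := haP hva
    have hmem : (⁅v, k⁆ : g) ∈ P := by
      rw [← lie_skew]
      exact P.neg_mem (hkp k hk v hvP)
    refine hnond _ hmem ?_
    intro q hq
    have hc := hcocycle v k q
    have h2 : Ω ⁅q, v⁆ k = 0 := hik _ (hpp q hq v hvP) k
    have h3 : Ω ⁅k, q⁆ v = 0 := hvo _ (Submodule.subset_span ⟨k, hk, q, hq, rfl⟩)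
    linarith
  -- elements of `V` are central
  have hcent : ∀ v ∈ V, ∀ z : g, ⁅v, z⁆ = 0 := by
    intro v hv z
    obtain ⟨hva, hvo⟩ := (hVmem v).mp hv
    have hvP : v ∈ P := haP hva
    have hVp : ∀ p ∈ P, ⁅v, p⁆ = 0 := by
      intro p hp
      refine hfaith _ (hpp v hvP p hp) ?_
      intro q hq
      obtain ⟨d, hd, w, hw, hdw⟩ := Submodule.mem_sup.mp
        (by rw [hsplit.sup_eq_top]; exact Submodule.mem_top : q ∈ _ ⊔ a.toSubmodule)
      have h1 : (⁅(⁅v, p⁆ : g), d⁆ : g) = 0 := hDbr v p d hd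
      have h2 : (⁅(⁅v, p⁆ : g), w⁆ : g) = 0 := by
        rw [lie_lie]
        have hw1 : (⁅v, w⁆ : g) = 0 := hab v hva w hw
        have hw2 : (⁅v, ⁅p, w⁆⁆ : g) = 0 := hVK v hv _ (hpp p hp w (haP hw))
        rw [hw1, hw2, lie_zero, sub_zero]
      rw [← hdw, lie_add, h1, h2, add_zero]
    obtain ⟨k, hk, p, hp, hkp'⟩ := Submodule.mem_sup.mp
      (by rw [hcompl.sup_eq_top]; exact Submodule.mem_top : z ∈ K ⊔ P)
    rw [← hkp', lie_add, hVK v hv k hk, hVp p hp, add_zero]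
  -- `Ω` pairs `V` trivially with the derived algebra
  have hΩVbr : ∀ v ∈ V, ∀ x y : g, Ω ⁅x, y⁆ v = 0 := by
    intro v hv x y
    have hc := hcocycle x y v
    have h1 : (⁅y, v⁆ : g) = 0 := by rw [← lie_skew, hcent v hv y, neg_zero]
    have h2 : (⁅v, x⁆ : g) = 0 := hcent v hv x
    rw [h1, h2] at hc
    simpa using hc
  have hΩVD : ∀ v ∈ V, ∀ d ∈ D, Ω d v = 0 := by
    intro v hv d hd
    have h1 : D ≤ LinearMap.ker (Ω.flip v) := by
      rw [hD, Submodule.span_le]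
      rintro z ⟨x, y, rfl⟩
      simpa using hΩVbr v hv x y
    simpa using h1 hd
  -- the orthogonal complement of `V`
  set W₂ : Submodule ℝ g := LinearMap.BilinForm.orthogonal Ω V with hW₂
  have hW₂mem : ∀ x : g, x ∈ W₂ ↔ ∀ w ∈ V, Ω w x = 0 := by
    intro x
    rw [hW₂, LinearMap.BilinForm.mem_orthogonal_iff]
  have hKW₂ : K ≤ W₂ := by
    intro k hk
    rw [hW₂mem]
    intro w hw
    rw [hskew, hik k hk w, neg_zero]
  have hDW₂ : D ≤ W₂ := by
    intro d hd
    rw [hW₂mem]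
    intro w hw
    rw [hskew, hΩVD w hw d hd, neg_zero]
  -- the restricted symplectic form on `P`
  set B : LinearMap.BilinForm ℝ P := LinearMap.BilinForm.restrict Ω P with hB
  have hBapp : ∀ x y : P, B x y = Ω x y := fun x y => rfl
  have hBrefl : B.IsRefl := by
    intro x y h
    rw [hBapp] at h ⊢
    rw [hskew, h, neg_zero]
  have hBnd : B.Nondegenerate := by
    constructor
    · intro m hm
      ext
      refine hnond m m.2 ?_
      intro y hy
      exact hm ⟨y, hy⟩
    · intro m hm'
      have hm : ∀ n, B m n = 0 := fun n => hBrefl _ _ (hm' n)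
      ext
      refine hnond m m.2 ?_
      intro y hy
      exact hm ⟨y, hy⟩
  -- submodules of `P`
  set LP : Submodule ℝ P := l'.comap P.subtype with hLP
  set A' : Submodule ℝ P := a.toSubmodule.comap P.subtype with hA'
  set V' : Submodule ℝ P := V.comap P.subtype with hV'
  have hLPmem : ∀ x : P, x ∈ LP ↔ (x : g) ∈ l' := fun x => Iff.rfl
  have hA'mem : ∀ x : P, x ∈ A' ↔ (x : g) ∈ a := fun x => Iff.rfl
  have hV'mem : ∀ x : P, x ∈ V' ↔ (x : g) ∈ V := fun x => Iff.rfl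
  -- `l'` is isotropic
  have hl'iso : ∀ m ∈ l', ∀ n ∈ l', Ω m n = 0 := by
    intro m hm n hn
    have hgen : ∀ x ∈ K, ∀ y ∈ P, Ω ⁅x, y⁆ n = 0 := by
      intro x hx y hy
      have hc := hcocycle x y n
      have h1 : Ω ⁅y, n⁆ x = 0 := hik _ (hpp y hy n (hl'P hn)) x
      have h2 : (⁅n, x⁆ : g) = 0 := hDK n (hl'D hn) x hx
      rw [h2] at hc
      simp only [LinearMap.map_zero, LinearMap.zero_apply] at hc
      linarith
    have h1 : l' ≤ LinearMap.ker (Ω.flip n) := by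
      rw [hl, Submodule.span_le]
      rintro z ⟨x, hx, y, hy, rfl⟩
      simpa using hgen x hx y hy
    simpa using h1 hm
  -- decomposition of brackets : `D ≤ K ⊔ l'`
  have hDKl : D ≤ K ⊔ l' := by
    rw [hD, Submodule.span_le]
    rintro z ⟨x, y, rfl⟩
    obtain ⟨k₁, hk₁, p₁, hp₁, hx⟩ := Submodule.mem_sup.mp
      (by rw [hcompl.sup_eq_top]; exact Submodule.mem_top : x ∈ K ⊔ P)
    obtain ⟨k₂, hk₂, p₂, hp₂, hy⟩ := Submodule.mem_sup.mp
      (by rw [hcompl.sup_eq_top]; exact Submodule.mem_top : y ∈ K ⊔ P)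
    have e : (⁅x, y⁆ : g) = ⁅k₁, k₂⁆ + ⁅k₁, p₂⁆ + ⁅p₁, k₂⁆ + ⁅p₁, p₂⁆ := by
      rw [← hx, ← hy]
      simp only [lie_add, add_lie]
      abel
    have h11 : (⁅k₁, k₂⁆ : g) = 0 := hDK k₁ (hKD hk₁) k₂ hk₂
    have h12 : (⁅k₁, p₂⁆ : g) ∈ l' := Submodule.subset_span ⟨k₁, hk₁, p₂, hp₂, rfl⟩
    have h21 : (⁅p₁, k₂⁆ : g) ∈ l' := by
      rw [← lie_skew]
      exact l'.neg_mem (Submodule.subset_span ⟨k₂, hk₂, p₁, hp₁, rfl⟩)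
    have h22 : (⁅p₁, p₂⁆ : g) ∈ K := hpp p₁ hp₁ p₂ hp₂
    rw [SetLike.mem_coe, e, h11, zero_add]
    exact add_mem (add_mem (Submodule.mem_sup_right h12) (Submodule.mem_sup_right h21))
      (Submodule.mem_sup_left h22)
  have hPD : ∀ x ∈ P, x ∈ D → x ∈ l' := by
    intro x hxP hxD
    obtain ⟨k, hk, m, hm, hkm⟩ := Submodule.mem_sup.mp (hDKl hxD)
    have : k = x - m := by rw [← hkm]; abel
    have hkP : k ∈ P := by
      rw [this]
      exact P.sub_mem hxP (hl'P hm)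
    have : k = 0 := by
      have := hcompl.disjoint.le_bot ⟨hk, hkP⟩
      simpa using this
    rw [← hkm, this, zero_add]
    exact hm
  -- `P = l' ⊕ a` inside `P`
  have hsupE : LP ⊔ A' = ⊤ := by
    rw [eq_top_iff]
    rintro ⟨p, hp⟩ -
    obtain ⟨d, hd, w, hw, hdw⟩ := Submodule.mem_sup.mp
      (by rw [hsplit.sup_eq_top]; exact Submodule.mem_top : p ∈ _ ⊔ a.toSubmodule)
    have hdP : d ∈ P := by
      have : d = p - w := by rw [← hdw]; abel
      rw [this]
      exact P.sub_mem hp (haP hw)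
    have hdl : d ∈ l' := hPD d hdP hd
    refine Submodule.mem_sup.mpr ⟨⟨d, hdP⟩, hdl, ⟨w, haP hw⟩, hw, ?_⟩
    ext
    simpa using hdw
  have hinfE : LP ⊓ A' = ⊥ := by
    rw [eq_bot_iff]
    rintro ⟨x, hxP⟩ ⟨hx1, hx2⟩
    have : x = 0 := by
      have := hsplit.disjoint.le_bot ⟨hl'D hx1, hx2⟩
      simpa using this
    simpa [Submodule.mem_bot] using this
  have hisComplLA : IsCompl LP A' := IsCompl.of_eq hinfE hsupE
  -- `V'` as an intersection
  have hV'eq : V' = A' ⊓ B.orthogonal LP := by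
    ext x
    rw [hV'mem, hVmem, Submodule.mem_inf, LinearMap.BilinForm.mem_orthogonal_iff]
    constructor
    · rintro ⟨h1, h2⟩
      exact ⟨h1, fun n hn => h2 (n : g) hn⟩
    · rintro ⟨h1, h2⟩
      exact ⟨h1, fun n hn => h2 ⟨n, hl'P hn⟩ hn⟩
  -- `LP` is isotropic
  have hLPiso : LP ≤ B.orthogonal LP := by
    intro x hx
    rw [LinearMap.BilinForm.mem_orthogonal_iff]
    intro n hn
    exact hl'iso (n : g) hn (x : g) hx
  -- key finrank identity : `B.orthogonal LP = LP ⊔ V'`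
  have hr1 : Module.finrank ℝ LP + Module.finrank ℝ (B.orthogonal LP) = Module.finrank ℝ P := by
    have := LinearMap.BilinForm.finrank_add_finrank_orthogonal hBrefl (B := B) LP
    rwa [LinearMap.BilinForm.orthogonal_top_eq_bot hBnd, inf_bot_eq, finrank_bot, add_zero] at this
  have hr2 : Module.finrank ℝ LP + Module.finrank ℝ A' = Module.finrank ℝ P :=
    Submodule.finrank_add_eq_of_isCompl hisComplLA
  have hr3 : Module.finrank ℝ (A' ⊔ B.orthogonal LP : Submodule ℝ P) + Module.finrank ℝ V' =
      Module.finrank ℝ A' + Module.finrank ℝ (B.orthogonal LP) := by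
    rw [hV'eq]
    exact Submodule.finrank_sup_add_finrank_inf_eq A' (B.orthogonal LP)
  have hr4 : Module.finrank ℝ (A' ⊔ B.orthogonal LP : Submodule ℝ P) ≤ Module.finrank ℝ P :=
    Submodule.finrank_le _
  have hLPV'bot : LP ⊓ V' = ⊥ := by
    rw [eq_bot_iff]
    intro x hx
    have : x ∈ LP ⊓ A' := ⟨hx.1, (hV'eq ▸ hx.2).1⟩
    rw [hinfE] at this
    exact this
  have hr5 : Module.finrank ℝ (LP ⊔ V' : Submodule ℝ P) =
      Module.finrank ℝ LP + Module.finrank ℝ V' := by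
    have := Submodule.finrank_sup_add_finrank_inf_eq LP V'
    rw [hLPV'bot, finrank_bot, add_zero] at this
    exact this
  have hkey : B.orthogonal LP = LP ⊔ V' := by
    refine (Submodule.eq_of_le_of_finrank_le ?_ ?_).symm
    · refine sup_le hLPiso ?_
      rw [hV'eq]
      exact inf_le_right
    · rw [hr5]
      omega
  -- `V'` and its orthogonal are complementary in `P`
  have hdisj : Disjoint V' (B.orthogonal V') := by
    rw [disjoint_iff]
    rw [eq_bot_iff]
    intro x hx
    obtain ⟨hx1, hx2⟩ := hx
    have hxLV : x ∈ B.orthogonal (LP ⊔ V') := by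
      rw [LinearMap.BilinForm.mem_orthogonal_iff]
      intro n hn
      obtain ⟨m, hm, u, hu, hmu⟩ := Submodule.mem_sup.mp hn
      have h1 : B m x = 0 := (hV'eq ▸ hx1).2 m hm
      have h2 : B u x = 0 := hx2 u hu
      rw [← hmu]
      simp only [LinearMap.BilinForm.IsOrtho, LinearMap.add_apply, map_add]
      rw [h1, h2, add_zero]
    rw [← hkey, LinearMap.BilinForm.orthogonal_orthogonal hBnd hBrefl] at hxLV
    have : x ∈ LP ⊓ A' := ⟨hxLV, (hV'eq ▸ hx1).1⟩
    rw [hinfE] at this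
    exact this
  have hisComplV' : IsCompl V' (B.orthogonal V') :=
    (LinearMap.BilinForm.isCompl_orthogonal_iff_disjoint hBrefl).mpr hdisj
  -- transfer to `g` : the orthogonal of `V'` sits inside `W₂`
  have horthW₂ : ∀ x : P, x ∈ B.orthogonal V' → (x : g) ∈ W₂ := by
    intro x hx
    rw [hW₂mem]
    intro w hw
    exact hx ⟨w, hVP hw⟩ hw
  -- `IsCompl V W₂`
  have hVW₂disj : V ⊓ W₂ = ⊥ := by
    rw [eq_bot_iff]
    intro x hx
    have hxP : x ∈ P := hVP hx.1
    have h1 : (⟨x, hxP⟩ : P) ∈ V' := hx.1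
    have h2 : (⟨x, hxP⟩ : P) ∈ B.orthogonal V' := by
      rw [LinearMap.BilinForm.mem_orthogonal_iff]
      intro n hn
      exact (hW₂mem x).mp hx.2 (n : g) hn
    have := hdisj.le_bot ⟨h1, h2⟩
    simpa [Submodule.mem_bot] using this
  have hVW₂sup : V ⊔ W₂ = ⊤ := by
    rw [eq_top_iff]
    rintro z -
    obtain ⟨k, hk, p, hp, hkp'⟩ := Submodule.mem_sup.mp
      (by rw [hcompl.sup_eq_top]; exact Submodule.mem_top : z ∈ K ⊔ P)
    have hpV : p ∈ V ⊔ W₂ := by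
      have : (⟨p, hp⟩ : P) ∈ V' ⊔ B.orthogonal V' := by
        rw [hisComplV'.sup_eq_top]; exact Submodule.mem_top
      obtain ⟨u, hu, w, hw, huw⟩ := Submodule.mem_sup.mp this
      have : p = (u : g) + (w : g) := by
        have := congrArg (Subtype.val) huw
        simpa using this.symm
      rw [this]
      exact Submodule.add_mem _ (Submodule.mem_sup_left hu)
        (Submodule.mem_sup_right (horthW₂ w hw))
    rw [← hkp']
    exact Submodule.add_mem _ (Submodule.mem_sup_right (hKW₂ hk)) hpV
  have hisComplVW₂ : IsCompl V W₂ := IsCompl.of_eq hVW₂disj hVW₂sup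
  -- apply indecomposability
  have hmain := hindec V W₂
    (fun x w hw => by
      rw [← lie_skew, hcent w hw x, neg_zero]
      exact V.zero_mem)
    (fun x w hw => hDW₂ (Submodule.subset_span ⟨x, w, rfl⟩))
    (fun w hw => by
      rw [hσP w (hVP hw)]
      exact V.neg_mem hw)
    (fun w hw => by
      obtain ⟨k, hk, p, hp, hkp'⟩ := Submodule.mem_sup.mp
        (by rw [hcompl.sup_eq_top]; exact Submodule.mem_top : w ∈ K ⊔ P)
      have : σ w = k - p := by
        rw [← hkp', map_add, hσK k hk, hσP p hp]
        abel
      rw [this]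
      have hpW : p ∈ W₂ := by
        have : p = w - k := by rw [← hkp']; abel
        rw [this]
        exact W₂.sub_mem hw (hKW₂ hk)
      exact W₂.sub_mem (hKW₂ hk) hpW)
    hisComplVW₂
    (fun w hw w' hw' => hw' w hw)
  rcases hmain with hVbot | hW₂bot
  · have := hVbot ▸ hv₀V
    simpa using this
  · exfalso
    apply hnonflat
    rw [eq_bot_iff]
    intro k hk
    have := hW₂bot ▸ hKW₂ hk
    simpa using this
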